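/- Let G_V be the quotient of G_BV by the normal closure of {σ_i^2 : i ≥ 1} ∪ {τ_i^2 : i ≥ 1}, and let H_V be the presented group obtained from H by adding the two relators σ_1^2 = 1 and τ_1^2 = 1. Then there is a group isomorphism from H_V to G_V sending x_0 ↦ x_0, x_1 ↦ x_1, σ_1 ↦ σ_1, and τ_1 ↦ τ_1. (Hence Thompson's group V admits a presentation with 4 generators and 20 relators.) -/

import Mathlib

/-- Relator corresponding to the equation `u = v`. -/
def grel {α : Type*} (u v : FreeGroup α) : FreeGroup α := u * v⁻¹

/-- Generators of the braided Thompson group `BV`.  `s i` denotes `σ_{i+1}` and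
`t i` denotes `τ_{i+1}` (so that exactly the generators `σ_i, τ_i` with `i ≥ 1` occur). -/
inductive BVGen : Type
  | x : ℕ → BVGen
  | s : ℕ → BVGen
  | t : ℕ → BVGen

namespace BVGen

/-- The free-group letter `x_i`. -/
def X (i : ℕ) : FreeGroup BVGen := FreeGroup.of (BVGen.x i)

/-- The free-group letter `σ_i` (meaningful for `i ≥ 1`). -/
def S (i : ℕ) : FreeGroup BVGen := FreeGroup.of (BVGen.s (i - 1))

/-- The free-group letter `τ_i` (meaningful for `i ≥ 1`). -/
def T (i : ℕ) : FreeGroup BVGen := FreeGroup.of (BVGen.t (i - 1))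

/-- The defining relations of the braided Thompson group `BV`. -/
def bvRels : Set (FreeGroup BVGen) :=
  { g |
    (∃ i j, i < j ∧ g = grel (X j * X i) (X i * X (j + 1))) ∨
    (∃ i j, 1 ≤ i ∧ i + 2 ≤ j ∧ g = grel (S i * S j) (S j * S i)) ∨
    (∃ i, 1 ≤ i ∧ g = grel (S i * S (i + 1) * S i) (S (i + 1) * S i * S (i + 1))) ∨
    (∃ i j, 1 ≤ i ∧ i + 2 ≤ j ∧ g = grel (S i * T j) (T j * S i)) ∨
    (∃ i, 1 ≤ i ∧ g = grel (S i * T (i + 1) * S i) (T (i + 1) * S i * T (i + 1))) ∨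
    (∃ i j, 1 ≤ i ∧ i < j ∧ g = grel (S i * X j) (X j * S i)) ∨
    (∃ i, 1 ≤ i ∧ g = grel (S i * X i) (X (i - 1) * S (i + 1) * S i)) ∨
    (∃ i j, j + 2 ≤ i ∧ g = grel (S i * X j) (X j * S (i + 1))) ∨
    (∃ i, g = grel (S (i + 1) * X i) (X (i + 1) * S (i + 1) * S (i + 2))) ∨
    (∃ i j, j + 2 ≤ i ∧ g = grel (T i * X j) (X j * T (i + 1))) ∨
    (∃ i, 1 ≤ i ∧ g = grel (T i * X (i - 1)) (S i * T (i + 1))) ∨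
    (∃ i, 1 ≤ i ∧ g = grel (T i) (X (i - 1) * T (i + 1) * S i)) }

end BVGen

/-- The braided Thompson group `BV`, given by its infinite presentation. -/
abbrev GBV : Type := PresentedGroup BVGen.bvRels

namespace GBV

/-- The generator `x_i` of `BV`. -/
def xg (i : ℕ) : GBV := PresentedGroup.of (BVGen.x i)

/-- The generator `σ_i` of `BV` (meaningful for `i ≥ 1`). -/
def sg (i : ℕ) : GBV := PresentedGroup.of (BVGen.s (i - 1))

/-- The generator `τ_i` of `BV` (meaningful for `i ≥ 1`). -/
def tg (i : ℕ) : GBV := PresentedGroup.of (BVGen.t (i - 1))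

/-- H_n: the subgroup of `BV` generated by the B_n generators
`σ_1, …, σ_{n-2}, τ_{n-1}`. -/
def Hn (n : ℕ) : Subgroup GBV :=
  Subgroup.closure ({g | ∃ i, 1 ≤ i ∧ i + 2 ≤ n ∧ g = sg i} ∪ {tg (n - 1)})

end GBV

/-- The four generators of the finite presentation `H` of `BV`. -/
inductive HGen : Type
  | x0 | x1 | s1 | t1

/-- The abbreviations `x_i` in the free group on the four generators:
`x_{i+2} = x_i⁻¹ x_{i+1} x_i`. -/
def xH : ℕ → FreeGroup HGen
  | 0 => FreeGroup.of HGen.x0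
  | 1 => FreeGroup.of HGen.x1
  | (i + 2) => (xH i)⁻¹ * xH (i + 1) * xH i

/-- The abbreviations `σ_i` (meaningful for `i ≥ 1`):
`σ_{i+1} = x_{i-1}⁻¹ σ_i x_i σ_i⁻¹`. -/
def sH : ℕ → FreeGroup HGen
  | 0 => 1
  | 1 => FreeGroup.of HGen.s1
  | (i + 2) => (xH i)⁻¹ * sH (i + 1) * xH (i + 1) * (sH (i + 1))⁻¹

/-- The abbreviations `τ_i` (meaningful for `i ≥ 1`):
`τ_{i+1} = x_{i-1}⁻¹ τ_i σ_i⁻¹`. -/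
def tH : ℕ → FreeGroup HGen
  | 0 => 1
  | 1 => FreeGroup.of HGen.t1
  | (i + 2) => (xH i)⁻¹ * tH (i + 1) * (sH (i + 1))⁻¹

/-- The 18 defining relators of `H`. -/
def hRels : Set (FreeGroup HGen) :=
  { grel (xH 2 * xH 0) (xH 0 * xH 3),
    grel (xH 3 * xH 1) (xH 1 * xH 4),
    grel (sH 1 * xH 2) (xH 2 * sH 1),
    grel (sH 1 * xH 3) (xH 3 * sH 1),
    grel (sH 2 * xH 3) (xH 3 * sH 2),
    grel (sH 2 * xH 4) (xH 4 * sH 2),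
    grel (sH 2 * xH 0) (xH 0 * sH 3),
    grel (sH 3 * xH 1) (xH 1 * sH 4),
    grel (sH 1 * xH 0) (xH 1 * sH 1 * sH 2),
    grel (sH 2 * xH 1) (xH 2 * sH 2 * sH 3),
    grel (tH 2 * xH 0) (xH 0 * tH 3),
    grel (tH 3 * xH 1) (xH 1 * tH 4),
    grel (tH 1 * xH 0) (sH 1 * tH 2),
    grel (tH 2 * xH 1) (sH 2 * tH 3),
    grel (sH 1 * sH 3) (sH 3 * sH 1),
    grel (sH 1 * sH 2 * sH 1) (sH 2 * sH 1 * sH 2),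
    grel (sH 1 * tH 3) (tH 3 * sH 1),
    grel (sH 1 * tH 2 * sH 1) (tH 2 * sH 1 * tH 2) }

/-- The finitely presented group `H` (4 generators, 18 relators). -/
abbrev HGrp : Type := PresentedGroup hRels

/-- The normal closure of `{σ_i² : i ≥ 1} ∪ {τ_i² : i ≥ 1}` in `BV`. -/
def vRelsCl : Subgroup GBV :=
  Subgroup.normalClosure {g | ∃ i, 1 ≤ i ∧ (g = GBV.sg i ^ 2 ∨ g = GBV.tg i ^ 2)}

instance : vRelsCl.Normal := Subgroup.normalClosure_normal

/-- Thompson's group `V`, as the quotient of `BV` by the normal closure of the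
squares of the `σ_i` and `τ_i`. -/
abbrev GV : Type := GBV ⧸ vRelsCl

/-- The presentation of Thompson's group `V` obtained from `H` by adding the
relators `σ₁² = 1` and `τ₁² = 1` (4 generators, 20 relators). -/
abbrev HV : Type := PresentedGroup (hRels ∪ {sH 1 ^ 2, tH 1 ^ 2})
-- GBV-side lemmas (to be appended before the theorem)
section Helpers
variable {α : Type*} {rels : Set (FreeGroup α)}

lemma pg_mk_eq_one {r : FreeGroup α} (h : r ∈ rels) : PresentedGroup.mk rels r = 1 :=
  (QuotientGroup.eq_one_iff _).2 (Subgroup.subset_normalClosure h)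

lemma pg_rel_eq {u v : FreeGroup α} (h : grel u v ∈ rels) :
    PresentedGroup.mk rels u = PresentedGroup.mk rels v := by
  have h1 : PresentedGroup.mk rels (grel u v) = 1 := pg_mk_eq_one h
  rw [grel, map_mul, map_inv] at h1
  exact mul_inv_eq_one.mp h1

end Helpers

namespace GBV

/-- The projection from the free group to `GBV`. -/
def pb : FreeGroup BVGen →* GBV := PresentedGroup.mk _

lemma pb_X (i : ℕ) : pb (BVGen.X i) = xg i := rfl
lemma pb_S (i : ℕ) : pb (BVGen.S i) = sg i := rfl
lemma pb_T (i : ℕ) : pb (BVGen.T i) = tg i := rfl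

lemma gA {i j : ℕ} (h : i < j) : xg j * xg i = xg i * xg (j + 1) := by
  simpa [xg, sg, tg, BVGen.X, BVGen.S, BVGen.T, PresentedGroup.of] using pg_rel_eq (show _ ∈ BVGen.bvRels from Or.inl ⟨i, j, h, rfl⟩)

lemma gB1 {i j : ℕ} (h1 : 1 ≤ i) (h2 : i + 2 ≤ j) : sg i * sg j = sg j * sg i := by
  simpa [xg, sg, tg, BVGen.X, BVGen.S, BVGen.T, PresentedGroup.of] using pg_rel_eq (show _ ∈ BVGen.bvRels from Or.inr <| Or.inl ⟨i, j, h1, h2, rfl⟩)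

lemma gB2 {i : ℕ} (h1 : 1 ≤ i) :
    sg i * sg (i + 1) * sg i = sg (i + 1) * sg i * sg (i + 1) := by
  simpa [mul_assoc, xg, sg, tg, BVGen.X, BVGen.S, BVGen.T, PresentedGroup.of] using
    pg_rel_eq (show _ ∈ BVGen.bvRels from Or.inr <| Or.inr <| Or.inl ⟨i, h1, rfl⟩)

lemma gB3 {i j : ℕ} (h1 : 1 ≤ i) (h2 : i + 2 ≤ j) : sg i * tg j = tg j * sg i := by
  simpa [xg, sg, tg, BVGen.X, BVGen.S, BVGen.T, PresentedGroup.of] using pg_rel_eq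
    (show _ ∈ BVGen.bvRels from Or.inr <| Or.inr <| Or.inr <| Or.inl ⟨i, j, h1, h2, rfl⟩)

lemma gB4 {i : ℕ} (h1 : 1 ≤ i) :
    sg i * tg (i + 1) * sg i = tg (i + 1) * sg i * tg (i + 1) := by
  simpa [mul_assoc, xg, sg, tg, BVGen.X, BVGen.S, BVGen.T, PresentedGroup.of] using pg_rel_eq
    (show _ ∈ BVGen.bvRels from Or.inr <| Or.inr <| Or.inr <| Or.inr <| Or.inl ⟨i, h1, rfl⟩)

lemma gC1 {i j : ℕ} (h1 : 1 ≤ i) (h2 : i < j) : sg i * xg j = xg j * sg i := by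
  simpa [xg, sg, tg, BVGen.X, BVGen.S, BVGen.T, PresentedGroup.of] using pg_rel_eq (show _ ∈ BVGen.bvRels from
    Or.inr <| Or.inr <| Or.inr <| Or.inr <| Or.inr <| Or.inl ⟨i, j, h1, h2, rfl⟩)

lemma gC2 {i : ℕ} (h1 : 1 ≤ i) : sg i * xg i = xg (i - 1) * sg (i + 1) * sg i := by
  simpa [mul_assoc, xg, sg, tg, BVGen.X, BVGen.S, BVGen.T, PresentedGroup.of] using pg_rel_eq (show _ ∈ BVGen.bvRels from
    Or.inr <| Or.inr <| Or.inr <| Or.inr <| Or.inr <| Or.inr <| Or.inl ⟨i, h1, rfl⟩)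

lemma gC3 {i j : ℕ} (h2 : j + 2 ≤ i) : sg i * xg j = xg j * sg (i + 1) := by
  simpa [xg, sg, tg, BVGen.X, BVGen.S, BVGen.T, PresentedGroup.of] using pg_rel_eq (show _ ∈ BVGen.bvRels from
    Or.inr <| Or.inr <| Or.inr <| Or.inr <| Or.inr <| Or.inr <| Or.inr <| Or.inl ⟨i, j, h2, rfl⟩)

lemma gC4 (i : ℕ) : sg (i + 1) * xg i = xg (i + 1) * sg (i + 1) * sg (i + 2) := by
  simpa [mul_assoc, xg, sg, tg, BVGen.X, BVGen.S, BVGen.T, PresentedGroup.of] using pg_rel_eq (show _ ∈ BVGen.bvRels from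
    Or.inr <| Or.inr <| Or.inr <| Or.inr <| Or.inr <| Or.inr <| Or.inr <| Or.inr <|
      Or.inl ⟨i, rfl⟩)

lemma gD1 {i j : ℕ} (h2 : j + 2 ≤ i) : tg i * xg j = xg j * tg (i + 1) := by
  simpa [xg, sg, tg, BVGen.X, BVGen.S, BVGen.T, PresentedGroup.of] using pg_rel_eq (show _ ∈ BVGen.bvRels from
    Or.inr <| Or.inr <| Or.inr <| Or.inr <| Or.inr <| Or.inr <| Or.inr <| Or.inr <| Or.inr <|
      Or.inl ⟨i, j, h2, rfl⟩)

lemma gD2 {i : ℕ} (h1 : 1 ≤ i) : tg i * xg (i - 1) = sg i * tg (i + 1) := by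
  simpa [xg, sg, tg, BVGen.X, BVGen.S, BVGen.T, PresentedGroup.of] using pg_rel_eq (show _ ∈ BVGen.bvRels from
    Or.inr <| Or.inr <| Or.inr <| Or.inr <| Or.inr <| Or.inr <| Or.inr <| Or.inr <| Or.inr <|
      Or.inr <| Or.inl ⟨i, h1, rfl⟩)

lemma gD3 {i : ℕ} (h1 : 1 ≤ i) : tg i = xg (i - 1) * tg (i + 1) * sg i := by
  simpa [mul_assoc, xg, sg, tg, BVGen.X, BVGen.S, BVGen.T, PresentedGroup.of] using pg_rel_eq (show _ ∈ BVGen.bvRels from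
    Or.inr <| Or.inr <| Or.inr <| Or.inr <| Or.inr <| Or.inr <| Or.inr <| Or.inr <| Or.inr <|
      Or.inr <| Or.inr ⟨i, h1, rfl⟩)

end GBV
namespace GBV

/-- The candidate images of the four generators of `H` in `GBV`. -/
def fgen : HGen → GBV
  | HGen.x0 => xg 0
  | HGen.x1 => xg 1
  | HGen.s1 => sg 1
  | HGen.t1 => tg 1

/-- The induced homomorphism from the free group on the four generators to `GBV`. -/
def F : FreeGroup HGen →* GBV := FreeGroup.lift fgen

lemma gA' (i : ℕ) : xg (i + 1) * xg i = xg i * xg (i + 2) := gA (Nat.lt_succ_self i)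

lemma gC2' (i : ℕ) : sg (i + 1) * xg (i + 1) = xg i * sg (i + 2) * sg (i + 1) := by
  simpa using gC2 (i := i + 1) (Nat.le_add_left 1 i)

lemma gD3' (i : ℕ) : tg (i + 1) = xg i * tg (i + 2) * sg (i + 1) := by
  simpa using gD3 (i := i + 1) (Nat.le_add_left 1 i)

lemma F_xH : ∀ i, F (xH i) = xg i
  | 0 => rfl
  | 1 => rfl
  | (i + 2) => by
      rw [xH, map_mul, map_mul, map_inv, F_xH i, F_xH (i + 1), mul_assoc, gA' i]; group

lemma F_sH : ∀ i, F (sH (i + 1)) = sg (i + 1)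
  | 0 => rfl
  | (i + 1) => by
      rw [show i + 1 + 1 = i + 2 from rfl, sH, map_mul, map_mul, map_mul, map_inv, map_inv,
        F_xH i, F_xH (i + 1), F_sH i, mul_assoc ((xg i)⁻¹), gC2' i]; group

lemma F_tH : ∀ i, F (tH (i + 1)) = tg (i + 1)
  | 0 => rfl
  | (i + 1) => by
      rw [show i + 1 + 1 = i + 2 from rfl, tH, map_mul, map_mul, map_inv, map_inv,
        F_xH i, F_sH i, F_tH i, gD3' i]; group

end GBV
namespace GBV

/-- Projection from `GBV` to `GV`. -/
def mkV : GBV →* GV := QuotientGroup.mk' vRelsCl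

lemma mkV_sq_s (i : ℕ) (h : 1 ≤ i) : mkV (sg i ^ 2) = 1 := by
  rw [show mkV (sg i ^ 2) = QuotientGroup.mk (sg i ^ 2) from rfl, QuotientGroup.eq_one_iff]
  exact Subgroup.subset_normalClosure ⟨i, h, Or.inl rfl⟩

lemma mkV_sq_t (i : ℕ) (h : 1 ≤ i) : mkV (tg i ^ 2) = 1 := by
  rw [show mkV (tg i ^ 2) = QuotientGroup.mk (tg i ^ 2) from rfl, QuotientGroup.eq_one_iff]
  exact Subgroup.subset_normalClosure ⟨i, h, Or.inr rfl⟩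

/-- Candidate generator images in `GV`. -/
def fgenV : HGen → GV := fun a => mkV (fgen a)

lemma liftV_eq (w : FreeGroup HGen) : FreeGroup.lift fgenV w = mkV (F w) := by
  have : FreeGroup.lift fgenV = mkV.comp F := by
    apply FreeGroup.ext_hom; intro a; rfl
  rw [this]; rfl

lemma F_xH0 : F (xH 0) = xg 0 := F_xH 0
lemma F_xH1 : F (xH 1) = xg 1 := F_xH 1
lemma F_xH2 : F (xH 2) = xg 2 := F_xH 2
lemma F_xH3 : F (xH 3) = xg 3 := F_xH 3
lemma F_xH4 : F (xH 4) = xg 4 := F_xH 4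
lemma F_sH1 : F (sH 1) = sg 1 := F_sH 0
lemma F_sH2 : F (sH 2) = sg 2 := F_sH 1
lemma F_sH3 : F (sH 3) = sg 3 := F_sH 2
lemma F_sH4 : F (sH 4) = sg 4 := F_sH 3
lemma F_tH1 : F (tH 1) = tg 1 := F_tH 0
lemma F_tH2 : F (tH 2) = tg 2 := F_tH 1
lemma F_tH3 : F (tH 3) = tg 3 := F_tH 2
lemma F_tH4 : F (tH 4) = tg 4 := F_tH 3

lemma phi_rels : ∀ r ∈ hRels ∪ {sH 1 ^ 2, tH 1 ^ 2}, FreeGroup.lift fgenV r = 1 := by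
  intro r hr
  rw [liftV_eq]
  rcases hr with hr | hr
  · simp only [hRels, Set.mem_insert_iff, Set.mem_singleton_iff] at hr
    suffices h : F r = 1 by rw [h, map_one]
    rcases hr with rfl|rfl|rfl|rfl|rfl|rfl|rfl|rfl|rfl|rfl|rfl|rfl|rfl|rfl|rfl|rfl|rfl|rfl
    · rw [grel, map_mul, map_inv, mul_inv_eq_one]
      simp only [map_mul, F_xH0, F_xH1, F_xH2, F_xH3, F_xH4, F_sH1, F_sH2, F_sH3, F_sH4,
        F_tH1, F_tH2, F_tH3, F_tH4]
      exact gA (i := 0) (j := 2) (by norm_num)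
    · rw [grel, map_mul, map_inv, mul_inv_eq_one]
      simp only [map_mul, F_xH0, F_xH1, F_xH2, F_xH3, F_xH4, F_sH1, F_sH2, F_sH3, F_sH4,
        F_tH1, F_tH2, F_tH3, F_tH4]
      exact gA (i := 1) (j := 3) (by norm_num)
    · rw [grel, map_mul, map_inv, mul_inv_eq_one]
      simp only [map_mul, F_xH0, F_xH1, F_xH2, F_xH3, F_xH4, F_sH1, F_sH2, F_sH3, F_sH4,
        F_tH1, F_tH2, F_tH3, F_tH4]
      exact gC1 (i := 1) (j := 2) (by norm_num) (by norm_num)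
    · rw [grel, map_mul, map_inv, mul_inv_eq_one]
      simp only [map_mul, F_xH0, F_xH1, F_xH2, F_xH3, F_xH4, F_sH1, F_sH2, F_sH3, F_sH4,
        F_tH1, F_tH2, F_tH3, F_tH4]
      exact gC1 (i := 1) (j := 3) (by norm_num) (by norm_num)
    · rw [grel, map_mul, map_inv, mul_inv_eq_one]
      simp only [map_mul, F_xH0, F_xH1, F_xH2, F_xH3, F_xH4, F_sH1, F_sH2, F_sH3, F_sH4,
        F_tH1, F_tH2, F_tH3, F_tH4]
      exact gC1 (i := 2) (j := 3) (by norm_num) (by norm_num)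
    · rw [grel, map_mul, map_inv, mul_inv_eq_one]
      simp only [map_mul, F_xH0, F_xH1, F_xH2, F_xH3, F_xH4, F_sH1, F_sH2, F_sH3, F_sH4,
        F_tH1, F_tH2, F_tH3, F_tH4]
      exact gC1 (i := 2) (j := 4) (by norm_num) (by norm_num)
    · rw [grel, map_mul, map_inv, mul_inv_eq_one]
      simp only [map_mul, F_xH0, F_xH1, F_xH2, F_xH3, F_xH4, F_sH1, F_sH2, F_sH3, F_sH4,
        F_tH1, F_tH2, F_tH3, F_tH4]
      exact gC3 (i := 2) (j := 0) (by norm_num)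
    · rw [grel, map_mul, map_inv, mul_inv_eq_one]
      simp only [map_mul, F_xH0, F_xH1, F_xH2, F_xH3, F_xH4, F_sH1, F_sH2, F_sH3, F_sH4,
        F_tH1, F_tH2, F_tH3, F_tH4]
      exact gC3 (i := 3) (j := 1) (by norm_num)
    · rw [grel, map_mul, map_inv, mul_inv_eq_one]
      simp only [map_mul, F_xH0, F_xH1, F_xH2, F_xH3, F_xH4, F_sH1, F_sH2, F_sH3, F_sH4,
        F_tH1, F_tH2, F_tH3, F_tH4]
      exact gC4 0
    · rw [grel, map_mul, map_inv, mul_inv_eq_one]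
      simp only [map_mul, F_xH0, F_xH1, F_xH2, F_xH3, F_xH4, F_sH1, F_sH2, F_sH3, F_sH4,
        F_tH1, F_tH2, F_tH3, F_tH4]
      exact gC4 1
    · rw [grel, map_mul, map_inv, mul_inv_eq_one]
      simp only [map_mul, F_xH0, F_xH1, F_xH2, F_xH3, F_xH4, F_sH1, F_sH2, F_sH3, F_sH4,
        F_tH1, F_tH2, F_tH3, F_tH4]
      exact gD1 (i := 2) (j := 0) (by norm_num)
    · rw [grel, map_mul, map_inv, mul_inv_eq_one]
      simp only [map_mul, F_xH0, F_xH1, F_xH2, F_xH3, F_xH4, F_sH1, F_sH2, F_sH3, F_sH4,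
        F_tH1, F_tH2, F_tH3, F_tH4]
      exact gD1 (i := 3) (j := 1) (by norm_num)
    · rw [grel, map_mul, map_inv, mul_inv_eq_one]
      simp only [map_mul, F_xH0, F_xH1, F_xH2, F_xH3, F_xH4, F_sH1, F_sH2, F_sH3, F_sH4,
        F_tH1, F_tH2, F_tH3, F_tH4]
      exact gD2 (i := 1) (by norm_num)
    · rw [grel, map_mul, map_inv, mul_inv_eq_one]
      simp only [map_mul, F_xH0, F_xH1, F_xH2, F_xH3, F_xH4, F_sH1, F_sH2, F_sH3, F_sH4,
        F_tH1, F_tH2, F_tH3, F_tH4]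
      exact gD2 (i := 2) (by norm_num)
    · rw [grel, map_mul, map_inv, mul_inv_eq_one]
      simp only [map_mul, F_xH0, F_xH1, F_xH2, F_xH3, F_xH4, F_sH1, F_sH2, F_sH3, F_sH4,
        F_tH1, F_tH2, F_tH3, F_tH4]
      exact gB1 (i := 1) (j := 3) (by norm_num) (by norm_num)
    · rw [grel, map_mul, map_inv, mul_inv_eq_one]
      simp only [map_mul, F_xH0, F_xH1, F_xH2, F_xH3, F_xH4, F_sH1, F_sH2, F_sH3, F_sH4,
        F_tH1, F_tH2, F_tH3, F_tH4]
      exact gB2 (i := 1) (by norm_num)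
    · rw [grel, map_mul, map_inv, mul_inv_eq_one]
      simp only [map_mul, F_xH0, F_xH1, F_xH2, F_xH3, F_xH4, F_sH1, F_sH2, F_sH3, F_sH4,
        F_tH1, F_tH2, F_tH3, F_tH4]
      exact gB3 (i := 1) (j := 3) (by norm_num) (by norm_num)
    · rw [grel, map_mul, map_inv, mul_inv_eq_one]
      simp only [map_mul, F_xH0, F_xH1, F_xH2, F_xH3, F_xH4, F_sH1, F_sH2, F_sH3, F_sH4,
        F_tH1, F_tH2, F_tH3, F_tH4]
      exact gB4 (i := 1) (by norm_num)
  · rcases hr with rfl | rfl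
    · rw [map_pow, F_sH1, mkV_sq_s 1 le_rfl]
    · rw [map_pow, F_tH1, mkV_sq_t 1 le_rfl]

/-- The homomorphism `HV →* GV`. -/
def Phi : HV →* GV := PresentedGroup.toGroup phi_rels

lemma Phi_x0 : Phi (PresentedGroup.of HGen.x0) = mkV (xg 0) := PresentedGroup.toGroup.of _
lemma Phi_x1 : Phi (PresentedGroup.of HGen.x1) = mkV (xg 1) := PresentedGroup.toGroup.of _
lemma Phi_s1 : Phi (PresentedGroup.of HGen.s1) = mkV (sg 1) := PresentedGroup.toGroup.of _
lemma Phi_t1 : Phi (PresentedGroup.of HGen.t1) = mkV (tg 1) := PresentedGroup.toGroup.of _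

end GBV
section MulHelpers
variable {G : Type*} [Group G]

/-- From `a * b = b * c` deduce `a⁻¹ * b = b * c⁻¹`. -/
lemma inv_conj {a b c : G} (h : a * b = b * c) : a⁻¹ * b = b * c⁻¹ := by
  rw [eq_comm, mul_inv_eq_iff_eq_mul, mul_assoc, ← h, inv_mul_cancel_left]

lemma R1 {a b c d : G} (h : a * b = c * d) (t : G) : a * (b * t) = c * (d * t) := by
  simp only [← mul_assoc]; rw [h]
lemma R2 {a b c d e : G} (h : a * b = c * d * e) (t : G) :
    a * (b * t) = c * (d * (e * t)) := by simp only [← mul_assoc]; rw [h]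
lemma R3 {a b c d e : G} (h : a * b * c = d * e) (t : G) :
    a * (b * (c * t)) = d * (e * t) := by simp only [← mul_assoc]; rw [h]
lemma R4 {a b c d e f : G} (h : a * b * c = d * e * f) (t : G) :
    a * (b * (c * t)) = d * (e * (f * t)) := by simp only [← mul_assoc]; rw [h]
lemma R5 {a b c : G} (h : a = b * c) (t : G) : a * t = b * (c * t) := by
  simp only [← mul_assoc]; rw [← h]
lemma R6 {a b c : G} (h : a * b = c) (t : G) : a * (b * t) = c * t := by
  simp only [← mul_assoc]; rw [h]

end MulHelpers

namespace HVL

/-- Projection to `HV`. -/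
def pm : FreeGroup HGen →* HV := PresentedGroup.mk _

/-- `x_i` as an element of `HV`. -/
def X (i : ℕ) : HV := pm (xH i)
/-- `σ_i` as an element of `HV`. -/
def S (i : ℕ) : HV := pm (sH i)
/-- `τ_i` as an element of `HV`. -/
def T (i : ℕ) : HV := pm (tH i)

lemma dX (i : ℕ) : X (i + 2) = (X i)⁻¹ * (X (i + 1) * X i) := by
  simp only [X, xH, map_mul, map_inv, mul_assoc]

lemma dS (i : ℕ) : S (i + 2) = (X i)⁻¹ * (S (i + 1) * (X (i + 1) * (S (i + 1))⁻¹)) := by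
  simp only [S, X, sH, map_mul, map_inv, mul_assoc]

lemma dT (i : ℕ) : T (i + 2) = (X i)⁻¹ * (T (i + 1) * (S (i + 1))⁻¹) := by
  simp only [T, X, S, tH, map_mul, map_inv, mul_assoc]

local notation "hvRels" => (hRels ∪ {sH 1 ^ 2, tH 1 ^ 2} : Set (FreeGroup HGen))

lemma hv_rel {u v : FreeGroup HGen} (h : grel u v ∈ hRels) : pm u = pm v :=
  pg_rel_eq (Set.mem_union_left _ h)

end HVL
namespace HVL

lemma hr1 : X 2 * X 0 = X 0 * X 3 := by
  have h := hv_rel (show _ ∈ hRels by rw [hRels]; left; rfl)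
  beta_reduce at h
  simpa [mul_assoc, X, S, T, pm, map_mul] using h

lemma hr2 : X 3 * X 1 = X 1 * X 4 := by
  have h := hv_rel (show _ ∈ hRels by rw [hRels]; right; left; rfl)
  beta_reduce at h
  simpa [mul_assoc, X, S, T, pm, map_mul] using h

lemma hr3 : S 1 * X 2 = X 2 * S 1 := by
  have h := hv_rel (show _ ∈ hRels by rw [hRels]; right; right; left; rfl)
  beta_reduce at h
  simpa [mul_assoc, X, S, T, pm, map_mul] using h

lemma hr4 : S 1 * X 3 = X 3 * S 1 := by
  have h := hv_rel (show _ ∈ hRels by rw [hRels]; right; right; right; left; rfl)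
  beta_reduce at h
  simpa [mul_assoc, X, S, T, pm, map_mul] using h

lemma hr5 : S 2 * X 3 = X 3 * S 2 := by
  have h := hv_rel (show _ ∈ hRels by rw [hRels]; right; right; right; right; left; rfl)
  beta_reduce at h
  simpa [mul_assoc, X, S, T, pm, map_mul] using h

lemma hr6 : S 2 * X 4 = X 4 * S 2 := by
  have h := hv_rel (show _ ∈ hRels by rw [hRels]; right; right; right; right; right; left; rfl)
  beta_reduce at h
  simpa [mul_assoc, X, S, T, pm, map_mul] using h

lemma hr7 : S 2 * X 0 = X 0 * S 3 := by
  have h := hv_rel (show _ ∈ hRels by rw [hRels]; right; right; right; right; right; right; left; rfl)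
  beta_reduce at h
  simpa [mul_assoc, X, S, T, pm, map_mul] using h

lemma hr8 : S 3 * X 1 = X 1 * S 4 := by
  have h := hv_rel (show _ ∈ hRels by rw [hRels]; right; right; right; right; right; right; right; left; rfl)
  beta_reduce at h
  simpa [mul_assoc, X, S, T, pm, map_mul] using h

lemma hr9 : S 1 * X 0 = X 1 * S 1 * S 2 := by
  have h := hv_rel (show _ ∈ hRels by rw [hRels]; right; right; right; right; right; right; right; right; left; rfl)
  beta_reduce at h
  simpa [mul_assoc, X, S, T, pm, map_mul] using h

lemma hr10 : S 2 * X 1 = X 2 * S 2 * S 3 := by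
  have h := hv_rel (show _ ∈ hRels by rw [hRels]; right; right; right; right; right; right; right; right; right; left; rfl)
  beta_reduce at h
  simpa [mul_assoc, X, S, T, pm, map_mul] using h

lemma hr11 : T 2 * X 0 = X 0 * T 3 := by
  have h := hv_rel (show _ ∈ hRels by rw [hRels]; right; right; right; right; right; right; right; right; right; right; left; rfl)
  beta_reduce at h
  simpa [mul_assoc, X, S, T, pm, map_mul] using h

lemma hr12 : T 3 * X 1 = X 1 * T 4 := by
  have h := hv_rel (show _ ∈ hRels by rw [hRels]; right; right; right; right; right; right; right; right; right; right; right; left; rfl)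
  beta_reduce at h
  simpa [mul_assoc, X, S, T, pm, map_mul] using h

lemma hr13 : T 1 * X 0 = S 1 * T 2 := by
  have h := hv_rel (show _ ∈ hRels by rw [hRels]; right; right; right; right; right; right; right; right; right; right; right; right; left; rfl)
  beta_reduce at h
  simpa [mul_assoc, X, S, T, pm, map_mul] using h

lemma hr14 : T 2 * X 1 = S 2 * T 3 := by
  have h := hv_rel (show _ ∈ hRels by rw [hRels]; right; right; right; right; right; right; right; right; right; right; right; right; right; left; rfl)
  beta_reduce at h
  simpa [mul_assoc, X, S, T, pm, map_mul] using h

lemma hr15 : S 1 * S 3 = S 3 * S 1 := by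
  have h := hv_rel (show _ ∈ hRels by rw [hRels]; right; right; right; right; right; right; right; right; right; right; right; right; right; right; left; rfl)
  beta_reduce at h
  simpa [mul_assoc, X, S, T, pm, map_mul] using h

lemma hr16 : S 1 * S 2 * S 1 = S 2 * S 1 * S 2 := by
  have h := hv_rel (show _ ∈ hRels by rw [hRels]; right; right; right; right; right; right; right; right; right; right; right; right; right; right; right; left; rfl)
  beta_reduce at h
  simpa [mul_assoc, X, S, T, pm, map_mul] using h

lemma hr17 : S 1 * T 3 = T 3 * S 1 := by
  have h := hv_rel (show _ ∈ hRels by rw [hRels]; right; right; right; right; right; right; right; right; right; right; right; right; right; right; right; right; left; rfl)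
  beta_reduce at h
  simpa [mul_assoc, X, S, T, pm, map_mul] using h

lemma hr18 : S 1 * T 2 * S 1 = T 2 * S 1 * T 2 := by
  have h := hv_rel (show _ ∈ hRels by rw [hRels]; right; right; right; right; right; right; right; right; right; right; right; right; right; right; right; right; right; rfl)
  beta_reduce at h
  simpa [mul_assoc, X, S, T, pm, map_mul] using h

lemma hsq1 : S 1 * S 1 = 1 := by
  have h : pm (sH 1 * sH 1) = 1 := by
    rw [← pow_two]
    exact pg_mk_eq_one (Set.mem_union_right _ (by left; rfl))
  rwa [map_mul] at h

lemma htq1 : T 1 * T 1 = 1 := by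
  have h : pm (tH 1 * tH 1) = 1 := by
    rw [← pow_two]
    exact pg_mk_eq_one (Set.mem_union_right _ (by right; rfl))
  rwa [map_mul] at h

end HVL
section MulHelpers2
variable {G : Type*} [Group G]

/-- From `p * a = a * q` deduce `q * a⁻¹ = a⁻¹ * p`. -/
lemma inv_conj' {p a q : G} (h : p * a = a * q) : q * a⁻¹ = a⁻¹ * p := by
  simpa [mul_assoc] using (congrArg (fun z => a⁻¹ * z * a⁻¹) h).symm

end MulHelpers2

namespace HVL

lemma hA : ∀ i, ∀ j, i < j → X j * X i = X i * X (j + 1) := by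
  intro i
  induction i using Nat.strong_induction_on with
  | _ i ihi =>
    intro j
    induction j using Nat.strong_induction_on with
    | _ j ihj =>
      intro hij
      match i, j, hij with
      | 0, 1, _ => have d : X 2 = (X 0)⁻¹ * (X 1 * X 0) := dX 0
                   rw [d]; group
      | 0, 2, _ => exact hr1
      | 0, (m+3), _ =>
        have h1 : X (m+1) * X 0 = X 0 * X (m+2) := ihj (m+1) (by omega) (by omega)
        have h2 : X (m+2) * X 0 = X 0 * X (m+3) := ihj (m+2) (by omega) (by omega)
        have h3 : (X (m+1))⁻¹ * X 0 = X 0 * (X (m+2))⁻¹ := inv_conj h1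
        have d1 : X (m+3) = (X (m+1))⁻¹ * (X (m+2) * X (m+1)) := dX (m+1)
        have d2 : X (m+4) = (X (m+2))⁻¹ * (X (m+3) * X (m+2)) := dX (m+2)
        calc X (m+3) * X 0
            = (X (m+1))⁻¹ * (X (m+2) * (X (m+1) * X 0)) := by rw [d1]; group
          _ = (X (m+1))⁻¹ * (X (m+2) * (X 0 * X (m+2))) := by rw [h1]
          _ = (X (m+1))⁻¹ * (X 0 * (X (m+3) * X (m+2))) := by rw [R1 h2]
          _ = X 0 * ((X (m+2))⁻¹ * (X (m+3) * X (m+2))) := by rw [← mul_assoc, h3, mul_assoc]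
          _ = X 0 * X (m+4) := by rw [d2]
      | 1, 2, _ => have d : X 3 = (X 1)⁻¹ * (X 2 * X 1) := dX 1
                   rw [d]; group
      | 1, 3, _ => exact hr2
      | 1, (m+4), _ =>
        have h1 : X (m+2) * X 1 = X 1 * X (m+3) := ihj (m+2) (by omega) (by omega)
        have h2 : X (m+3) * X 1 = X 1 * X (m+4) := ihj (m+3) (by omega) (by omega)
        have h3 : (X (m+2))⁻¹ * X 1 = X 1 * (X (m+3))⁻¹ := inv_conj h1
        have d1 : X (m+4) = (X (m+2))⁻¹ * (X (m+3) * X (m+2)) := dX (m+2)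
        have d2 : X (m+5) = (X (m+3))⁻¹ * (X (m+4) * X (m+3)) := dX (m+3)
        calc X (m+4) * X 1
            = (X (m+2))⁻¹ * (X (m+3) * (X (m+2) * X 1)) := by rw [d1]; group
          _ = (X (m+2))⁻¹ * (X (m+3) * (X 1 * X (m+3))) := by rw [h1]
          _ = (X (m+2))⁻¹ * (X 1 * (X (m+4) * X (m+3))) := by rw [R1 h2]
          _ = X 1 * ((X (m+3))⁻¹ * (X (m+4) * X (m+3))) := by rw [← mul_assoc, h3, mul_assoc]
          _ = X 1 * X (m+5) := by rw [d2]
      | (i+2), (n+1), hij =>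
        have h1 : X n * X i = X i * X (n+1) := ihi i (by omega) n (by omega)
        have h2 : X n * X (i+1) = X (i+1) * X (n+1) := ihi (i+1) (by omega) n (by omega)
        have h3 : X (n+1) * X i = X i * X (n+2) := ihi i (by omega) (n+1) (by omega)
        have h0 : X (i+2) = (X i)⁻¹ * (X (i+1) * X i) := dX i
        calc X (n+1) * X (i+2)
            = X (n+1) * ((X i)⁻¹ * (X (i+1) * X i)) := by rw [h0]
          _ = (X i)⁻¹ * (X n * (X (i+1) * X i)) := by
                rw [← mul_assoc, inv_conj' h1, mul_assoc]
          _ = (X i)⁻¹ * (X (i+1) * (X (n+1) * X i)) := by rw [R1 h2]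
          _ = (X i)⁻¹ * (X (i+1) * (X i * X (n+2))) := by rw [h3]
          _ = X (i+2) * X (n+2) := by rw [h0]; group

end HVL
namespace HVL

lemma hC3_0 : ∀ m, S (m+2) * X 0 = X 0 * S (m+3)
  | 0 => hr7
  | (m+1) => by
    have IH := hC3_0 m
    have d1 : S (m+3) = (X (m+1))⁻¹ * (S (m+2) * (X (m+2) * (S (m+2))⁻¹)) := dS (m+1)
    have d2 : S (m+4) = (X (m+2))⁻¹ * (S (m+3) * (X (m+3) * (S (m+3))⁻¹)) := dS (m+2)
    have hIinv : (S (m+2))⁻¹ * X 0 = X 0 * (S (m+3))⁻¹ := inv_conj IH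
    have hA02 : X (m+2) * X 0 = X 0 * X (m+3) := hA 0 (m+2) (by omega)
    have hA01inv : (X (m+1))⁻¹ * X 0 = X 0 * (X (m+2))⁻¹ := inv_conj (hA 0 (m+1) (by omega))
    calc S (m+3) * X 0
        = (X (m+1))⁻¹ * (S (m+2) * (X (m+2) * ((S (m+2))⁻¹ * X 0))) := by rw [d1]; group
      _ = (X (m+1))⁻¹ * (S (m+2) * (X (m+2) * (X 0 * (S (m+3))⁻¹))) := by rw [hIinv]
      _ = (X (m+1))⁻¹ * (S (m+2) * (X 0 * (X (m+3) * (S (m+3))⁻¹))) := by rw [R1 hA02]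
      _ = (X (m+1))⁻¹ * (X 0 * (S (m+3) * (X (m+3) * (S (m+3))⁻¹))) := by rw [R1 IH]
      _ = X 0 * ((X (m+2))⁻¹ * (S (m+3) * (X (m+3) * (S (m+3))⁻¹))) := by
            rw [← mul_assoc, hA01inv, mul_assoc]
      _ = X 0 * S (m+4) := by rw [d2]

lemma hC3_1 : ∀ m, S (m+3) * X 1 = X 1 * S (m+4)
  | 0 => hr8
  | (m+1) => by
    have IH := hC3_1 m
    have d1 : S (m+4) = (X (m+2))⁻¹ * (S (m+3) * (X (m+3) * (S (m+3))⁻¹)) := dS (m+2)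
    have d2 : S (m+5) = (X (m+3))⁻¹ * (S (m+4) * (X (m+4) * (S (m+4))⁻¹)) := dS (m+3)
    have hIinv : (S (m+3))⁻¹ * X 1 = X 1 * (S (m+4))⁻¹ := inv_conj IH
    have hA13 : X (m+3) * X 1 = X 1 * X (m+4) := hA 1 (m+3) (by omega)
    have hA12inv : (X (m+2))⁻¹ * X 1 = X 1 * (X (m+3))⁻¹ := inv_conj (hA 1 (m+2) (by omega))
    calc S (m+4) * X 1
        = (X (m+2))⁻¹ * (S (m+3) * (X (m+3) * ((S (m+3))⁻¹ * X 1))) := by rw [d1]; group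
      _ = (X (m+2))⁻¹ * (S (m+3) * (X (m+3) * (X 1 * (S (m+4))⁻¹))) := by rw [hIinv]
      _ = (X (m+2))⁻¹ * (S (m+3) * (X 1 * (X (m+4) * (S (m+4))⁻¹))) := by rw [R1 hA13]
      _ = (X (m+2))⁻¹ * (X 1 * (S (m+4) * (X (m+4) * (S (m+4))⁻¹))) := by rw [R1 IH]
      _ = X 1 * ((X (m+3))⁻¹ * (S (m+4) * (X (m+4) * (S (m+4))⁻¹))) := by
            rw [← mul_assoc, hA12inv, mul_assoc]
      _ = X 1 * S (m+5) := by rw [d2]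

lemma hD1_0 : ∀ m, T (m+2) * X 0 = X 0 * T (m+3)
  | 0 => hr11
  | (m+1) => by
    have IH := hD1_0 m
    have d1 : T (m+3) = (X (m+1))⁻¹ * (T (m+2) * (S (m+2))⁻¹) := dT (m+1)
    have d2 : T (m+4) = (X (m+2))⁻¹ * (T (m+3) * (S (m+3))⁻¹) := dT (m+2)
    have hSinv : (S (m+2))⁻¹ * X 0 = X 0 * (S (m+3))⁻¹ := inv_conj (hC3_0 m)
    have hA01inv : (X (m+1))⁻¹ * X 0 = X 0 * (X (m+2))⁻¹ := inv_conj (hA 0 (m+1) (by omega))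
    calc T (m+3) * X 0
        = (X (m+1))⁻¹ * (T (m+2) * ((S (m+2))⁻¹ * X 0)) := by rw [d1]; group
      _ = (X (m+1))⁻¹ * (T (m+2) * (X 0 * (S (m+3))⁻¹)) := by rw [hSinv]
      _ = (X (m+1))⁻¹ * (X 0 * (T (m+3) * (S (m+3))⁻¹)) := by rw [R1 IH]
      _ = X 0 * ((X (m+2))⁻¹ * (T (m+3) * (S (m+3))⁻¹)) := by
            rw [← mul_assoc, hA01inv, mul_assoc]
      _ = X 0 * T (m+4) := by rw [d2]

lemma hD1_1 : ∀ m, T (m+3) * X 1 = X 1 * T (m+4)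
  | 0 => hr12
  | (m+1) => by
    have IH := hD1_1 m
    have d1 : T (m+4) = (X (m+2))⁻¹ * (T (m+3) * (S (m+3))⁻¹) := dT (m+2)
    have d2 : T (m+5) = (X (m+3))⁻¹ * (T (m+4) * (S (m+4))⁻¹) := dT (m+3)
    have hSinv : (S (m+3))⁻¹ * X 1 = X 1 * (S (m+4))⁻¹ := inv_conj (hC3_1 m)
    have hA12inv : (X (m+2))⁻¹ * X 1 = X 1 * (X (m+3))⁻¹ := inv_conj (hA 1 (m+2) (by omega))
    calc T (m+4) * X 1
        = (X (m+2))⁻¹ * (T (m+3) * ((S (m+3))⁻¹ * X 1)) := by rw [d1]; group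
      _ = (X (m+2))⁻¹ * (T (m+3) * (X 1 * (S (m+4))⁻¹)) := by rw [hSinv]
      _ = (X (m+2))⁻¹ * (X 1 * (T (m+4) * (S (m+4))⁻¹)) := by rw [R1 IH]
      _ = X 1 * ((X (m+3))⁻¹ * (T (m+4) * (S (m+4))⁻¹)) := by
            rw [← mul_assoc, hA12inv, mul_assoc]
      _ = X 1 * T (m+5) := by rw [d2]

lemma hs1inv : (S 1)⁻¹ = S 1 := inv_eq_of_mul_eq_one_right hsq1
lemma ht1inv : (T 1)⁻¹ = T 1 := inv_eq_of_mul_eq_one_right htq1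

lemma hsq2 : S 2 * S 2 = 1 := by
  have e1 : S 2 = (X 0)⁻¹ * (S 1 * (X 1 * (S 1)⁻¹)) := dS 0
  have e2 : S 2 = (S 1)⁻¹ * ((X 1)⁻¹ * (S 1 * X 0)) := by rw [hr9]; group
  nth_rewrite 2 [e2]
  nth_rewrite 1 [e1]
  rw [hs1inv]
  simp only [mul_assoc]
  rw [R6 hsq1]
  simp only [one_mul]
  rw [show X 1 * ((X 1)⁻¹ * (S 1 * X 0)) = S 1 * X 0 from by group, R6 hsq1]
  group

lemma htq2 : T 2 * T 2 = 1 := by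
  have e1 : T 2 = (X 0)⁻¹ * (T 1 * (S 1)⁻¹) := dT 0
  have e2 : T 2 = (S 1)⁻¹ * (T 1 * X 0) := by rw [hr13]; group
  nth_rewrite 2 [e2]
  nth_rewrite 1 [e1]
  rw [hs1inv]
  simp only [mul_assoc]
  rw [R6 hsq1]
  simp only [one_mul]
  rw [R6 htq1]
  group

lemma hsqS : ∀ m, S (m+1) * S (m+1) = 1
  | 0 => hsq1
  | 1 => hsq2
  | (m+2) => by
    have e : S (m+3) = (X 0)⁻¹ * (S (m+2) * X 0) := by rw [hC3_0 m]; group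
    rw [e]
    simp only [mul_assoc]
    rw [show X 0 * ((X 0)⁻¹ * (S (m+2) * X 0)) = S (m+2) * X 0 from by group,
      R6 (hsqS (m+1))]
    group

lemma hsqT : ∀ m, T (m+1) * T (m+1) = 1
  | 0 => htq1
  | 1 => htq2
  | (m+2) => by
    have e : T (m+3) = (X 0)⁻¹ * (T (m+2) * X 0) := by rw [hD1_0 m]; group
    rw [e]
    simp only [mul_assoc]
    rw [show X 0 * ((X 0)⁻¹ * (T (m+2) * X 0)) = T (m+2) * X 0 from by group,
      R6 (hsqT (m+1))]
    group

lemma hSinv (m : ℕ) : (S (m+1))⁻¹ = S (m+1) := inv_eq_of_mul_eq_one_right (hsqS m)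
lemma hTinv (m : ℕ) : (T (m+1))⁻¹ = T (m+1) := inv_eq_of_mul_eq_one_right (hsqT m)

end HVL
section MulHelpers3
variable {G : Type*} [Group G]

lemma R2r {a b c d e : G} (h : a * b = c * (d * e)) (t : G) :
    a * (b * t) = c * (d * (e * t)) := by
  have h' : a * b = c * d * e := by rw [h]; group
  exact R2 h' t

end MulHelpers3

namespace HVL

/-- Conjugation by `X 0` (from the right), as an automorphism of `HV`. -/
def inn : HV ≃* HV := MulAut.conj ((X 0)⁻¹)

lemma inn_apply (g : HV) : inn g = (X 0)⁻¹ * g * X 0 := by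
  simp [inn, MulAut.conj_apply]

lemma shX1 (j : ℕ) : inn (X (j+1)) = X (j+2) := by
  have h : X (j+1) * X 0 = X 0 * X (j+2) := hA 0 (j+1) (by omega)
  rw [inn_apply, mul_assoc, h]; group

lemma shX2 (j : ℕ) : inn (X (j+2)) = X (j+3) := shX1 (j+1)
lemma shX3 (j : ℕ) : inn (X (j+3)) = X (j+4) := shX1 (j+2)

lemma shS2 (m : ℕ) : inn (S (m+2)) = S (m+3) := by
  rw [inn_apply, mul_assoc, hC3_0 m]; group

lemma shS3 (m : ℕ) : inn (S (m+3)) = S (m+4) := shS2 (m+1)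
lemma shS4 (m : ℕ) : inn (S (m+4)) = S (m+5) := shS2 (m+2)

lemma shT2 (m : ℕ) : inn (T (m+2)) = T (m+3) := by
  rw [inn_apply, mul_assoc, hD1_0 m]; group

lemma shT3 (m : ℕ) : inn (T (m+3)) = T (m+4) := shT2 (m+1)
lemma shT4 (m : ℕ) : inn (T (m+4)) = T (m+5) := shT2 (m+2)

lemma hC3 : ∀ j i, j + 2 ≤ i → S i * X j = X j * S (i+1)
  | 0, i, h => by
      obtain ⟨m, rfl⟩ : ∃ m, i = m+2 := ⟨i-2, by omega⟩
      exact hC3_0 m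
  | 1, i, h => by
      obtain ⟨m, rfl⟩ : ∃ m, i = m+3 := ⟨i-3, by omega⟩
      exact hC3_1 m
  | (j+2), i, h => by
      obtain ⟨m, rfl⟩ : ∃ m, i = m+4 := ⟨i-4, by omega⟩
      have prev : S (m+3) * X (j+1) = X (j+1) * S (m+4) := hC3 (j+1) (m+3) (by omega)
      have h2 := congrArg inn prev
      simp only [map_mul, shS3, shS4, shX1] at h2
      exact h2

lemma hD1 : ∀ j i, j + 2 ≤ i → T i * X j = X j * T (i+1)
  | 0, i, h => by
      obtain ⟨m, rfl⟩ : ∃ m, i = m+2 := ⟨i-2, by omega⟩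
      exact hD1_0 m
  | 1, i, h => by
      obtain ⟨m, rfl⟩ : ∃ m, i = m+3 := ⟨i-3, by omega⟩
      exact hD1_1 m
  | (j+2), i, h => by
      obtain ⟨m, rfl⟩ : ∃ m, i = m+4 := ⟨i-4, by omega⟩
      have prev : T (m+3) * X (j+1) = X (j+1) * T (m+4) := hD1 (j+1) (m+3) (by omega)
      have h2 := congrArg inn prev
      simp only [map_mul, shT3, shT4, shX1] at h2
      exact h2

lemma hC1_1 : ∀ m, Commute (S 1) (X (m+2))
  | 0 => hr3
  | 1 => hr4
  | (m+2) => by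
      have d : X (m+4) = (X (m+2))⁻¹ * (X (m+3) * X (m+2)) := dX (m+2)
      rw [d]
      exact (hC1_1 m).inv_right.mul_right ((hC1_1 (m+1)).mul_right (hC1_1 m))

lemma hC1_2 : ∀ m, Commute (S 2) (X (m+3))
  | 0 => hr5
  | 1 => hr6
  | (m+2) => by
      have d : X (m+5) = (X (m+3))⁻¹ * (X (m+4) * X (m+3)) := dX (m+3)
      rw [d]
      exact (hC1_2 m).inv_right.mul_right ((hC1_2 (m+1)).mul_right (hC1_2 m))

lemma hC1 : ∀ i j, 1 ≤ i → i < j → Commute (S i) (X j)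
  | 0, _, h0, _ => absurd h0 (by omega)
  | 1, j, _, hj => by
      obtain ⟨m, rfl⟩ : ∃ m, j = m+2 := ⟨j-2, by omega⟩
      exact hC1_1 m
  | 2, j, _, hj => by
      obtain ⟨m, rfl⟩ : ∃ m, j = m+3 := ⟨j-3, by omega⟩
      exact hC1_2 m
  | (i+3), j, _, hj => by
      obtain ⟨p, rfl⟩ : ∃ p, j = p+2 := ⟨j-2, by omega⟩
      have prev : S (i+2) * X (p+1) = X (p+1) * S (i+2) :=
        (hC1 (i+2) (p+1) (by omega) (by omega)).eq
      have h2 := congrArg inn prev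
      simp only [map_mul, shS2, shX1] at h2
      exact h2

lemma hC4 : ∀ i, S (i+1) * X i = X (i+1) * (S (i+1) * S (i+2))
  | 0 => by rw [hr9]; group
  | 1 => by rw [hr10]; group
  | (i+2) => by
      have prev := hC4 (i+1)
      have h2 := congrArg inn prev
      simp only [map_mul, shS2, shS3, shX1, shX2] at h2
      exact h2

lemma hC2 (i : ℕ) : S (i+1) * X (i+1) = X i * (S (i+2) * S (i+1)) := by
  rw [dS i]; group

lemma hD3 (i : ℕ) : T (i+1) = X i * (T (i+2) * S (i+1)) := by
  rw [dT i]; group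

lemma hD2 : ∀ i, T (i+1) * X i = S (i+1) * T (i+2)
  | 0 => hr13
  | 1 => hr14
  | (i+2) => by
      have prev := hD2 (i+1)
      have h2 := congrArg inn prev
      simp only [map_mul, shT2, shT3, shX1, shS2] at h2
      exact h2

end HVL
namespace HVL

/-- `σ₂` in terms of the generators, using `σ₁⁻¹ = σ₁`. -/
lemma eS2 : S 2 = (X 0)⁻¹ * (S 1 * (X 1 * S 1)) := by rw [dS 0, hs1inv]

lemma eX0S2 : X 0 * S 2 = S 1 * (X 1 * S 1) := by rw [eS2]; group

lemma eX1S3 : X 1 * S 3 = S 2 * (X 2 * S 2) := by rw [dS 1, hSinv 1]; group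

lemma eX1T3 : X 1 * T 3 = T 2 * S 2 := by rw [dT 1, hSinv 1]; group

lemma hB1_1 : ∀ m, Commute (S 1) (S (m+3))
  | 0 => hr15
  | (m+1) => by
      have d : S (m+4) = (X (m+2))⁻¹ * (S (m+3) * (X (m+3) * (S (m+3))⁻¹)) := dS (m+2)
      rw [d]
      exact (hC1_1 m).inv_right.mul_right
        ((hB1_1 m).mul_right ((hC1_1 (m+1)).mul_right (hB1_1 m).inv_right))

/-- The seed commutation `σ₂ σ₄ = σ₄ σ₂`. -/
lemma hB1_24 : Commute (S 2) (S 4) := by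
  show S 2 * S 4 = S 4 * S 2
  have c14 : S 1 * S 4 = S 4 * S 1 := (hB1_1 1).eq
  have h8 : X 1 * S 4 = S 3 * X 1 := hr8.symm
  have h30 : S 3 * X 0 = X 0 * S 4 := hC3_0 1
  calc S 2 * S 4
      = (X 0)⁻¹ * (S 1 * (X 1 * (S 1 * S 4))) := by rw [eS2]; group
    _ = (X 0)⁻¹ * (S 1 * (X 1 * (S 4 * S 1))) := by rw [c14]
    _ = (X 0)⁻¹ * (S 1 * (S 3 * (X 1 * S 1))) := by rw [R1 h8]
    _ = (X 0)⁻¹ * (S 3 * (S 1 * (X 1 * S 1))) := by rw [R1 hr15]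
    _ = (X 0)⁻¹ * (S 3 * (X 0 * S 2)) := by rw [eX0S2]
    _ = (X 0)⁻¹ * (X 0 * (S 4 * S 2)) := by rw [R1 h30]
    _ = S 4 * S 2 := by group

lemma hB1_2 : ∀ m, Commute (S 2) (S (m+4))
  | 0 => hB1_24
  | (m+1) => by
      have d : S (m+5) = (X (m+3))⁻¹ * (S (m+4) * (X (m+4) * (S (m+4))⁻¹)) := dS (m+3)
      rw [d]
      exact (hC1_2 m).inv_right.mul_right
        ((hB1_2 m).mul_right ((hC1_2 (m+1)).mul_right (hB1_2 m).inv_right))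

lemma hB1 : ∀ i j, 1 ≤ i → i + 2 ≤ j → Commute (S i) (S j)
  | 0, _, h0, _ => absurd h0 (by omega)
  | 1, j, _, hj => by
      obtain ⟨m, rfl⟩ : ∃ m, j = m+3 := ⟨j-3, by omega⟩
      exact hB1_1 m
  | 2, j, _, hj => by
      obtain ⟨m, rfl⟩ : ∃ m, j = m+4 := ⟨j-4, by omega⟩
      exact hB1_2 m
  | (i+3), j, _, hj => by
      obtain ⟨p, rfl⟩ : ∃ p, j = p+5 := ⟨j-5, by omega⟩
      have prev : S (i+2) * S (p+4) = S (p+4) * S (i+2) :=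
        (hB1 (i+2) (p+4) (by omega) (by omega)).eq
      have h2 := congrArg inn prev
      simp only [map_mul, shS2, shS4] at h2
      exact h2

lemma h16L : S 1 * (S 2 * S 1) = S 2 * (S 1 * S 2) := by
  rw [← mul_assoc, hr16, mul_assoc]

/-- The braid relations. -/
lemma hB2 : ∀ i, S (i+1) * (S (i+2) * S (i+1)) = S (i+2) * (S (i+1) * S (i+2))
  | 0 => h16L
  | 1 => by
      have L1 : X 0 * (S 2 * (S 3 * S 2)) = S 1 * (S 2 * (X 2 * (S 2 * (S 1 * S 2)))) := by
        calc X 0 * (S 2 * (S 3 * S 2))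
            = S 1 * (X 1 * (S 1 * (S 3 * S 2))) := by rw [R2r eX0S2]
          _ = S 1 * (X 1 * (S 3 * (S 1 * S 2))) := by rw [R1 hr15]
          _ = S 1 * (S 2 * (X 2 * (S 2 * (S 1 * S 2)))) := by rw [R2r eX1S3]
      have L2 : X 0 * (S 3 * (S 2 * S 3)) = S 1 * (S 2 * (X 2 * (S 2 * (S 1 * S 2)))) := by
        calc X 0 * (S 3 * (S 2 * S 3))
            = S 2 * (X 0 * (S 2 * S 3)) := by rw [R1 hr7.symm]
          _ = S 2 * (S 1 * (X 1 * (S 1 * S 3))) := by rw [R2r eX0S2]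
          _ = S 2 * (S 1 * (X 1 * (S 3 * S 1))) := by rw [hr15]
          _ = S 2 * (S 1 * (S 2 * (X 2 * (S 2 * S 1)))) := by rw [R2r eX1S3]
          _ = S 1 * (S 2 * (S 1 * (X 2 * (S 2 * S 1)))) := by rw [R4 hr16.symm]
          _ = S 1 * (S 2 * (X 2 * (S 1 * (S 2 * S 1)))) := by rw [R1 hr3]
          _ = S 1 * (S 2 * (X 2 * (S 2 * (S 1 * S 2)))) := by rw [h16L]
      exact mul_left_cancel (L1.trans L2.symm)
  | (i+2) => by
      have prev := hB2 (i+1)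
      have h2 := congrArg inn prev
      simp only [map_mul, shS2, shS3] at h2
      exact h2

lemma h18L : S 1 * (T 2 * S 1) = T 2 * (S 1 * T 2) := by
  rw [← mul_assoc, hr18, mul_assoc]

lemma hB4 : ∀ i, S (i+1) * (T (i+2) * S (i+1)) = T (i+2) * (S (i+1) * T (i+2))
  | 0 => h18L
  | 1 => by
      have L1 : X 0 * (S 2 * (T 3 * S 2)) = S 1 * (T 2 * (S 1 * (S 2 * S 1))) := by
        calc X 0 * (S 2 * (T 3 * S 2))
            = S 1 * (X 1 * (S 1 * (T 3 * S 2))) := by rw [R2r eX0S2]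
          _ = S 1 * (X 1 * (T 3 * (S 1 * S 2))) := by rw [R1 hr17]
          _ = S 1 * (T 2 * (S 2 * (S 1 * S 2))) := by rw [R1 eX1T3]
          _ = S 1 * (T 2 * (S 1 * (S 2 * S 1))) := by rw [h16L]
      have L2 : X 0 * (T 3 * (S 2 * T 3)) = S 1 * (T 2 * (S 1 * (S 2 * S 1))) := by
        calc X 0 * (T 3 * (S 2 * T 3))
            = T 2 * (X 0 * (S 2 * T 3)) := by rw [R1 hr11.symm]
          _ = T 2 * (S 1 * (X 1 * (S 1 * T 3))) := by rw [R2r eX0S2]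
          _ = T 2 * (S 1 * (X 1 * (T 3 * S 1))) := by rw [hr17]
          _ = T 2 * (S 1 * (T 2 * (S 2 * S 1))) := by rw [R1 eX1T3]
          _ = S 1 * (T 2 * (S 1 * (S 2 * S 1))) := by rw [R4 hr18.symm]
      exact mul_left_cancel (L1.trans L2.symm)
  | (i+2) => by
      have prev := hB4 (i+1)
      have h2 := congrArg inn prev
      simp only [map_mul, shS2, shT3] at h2
      exact h2

lemma hB3_1 : ∀ m, Commute (S 1) (T (m+3))
  | 0 => hr17
  | (m+1) => by
      have d : T (m+4) = (X (m+2))⁻¹ * (T (m+3) * (S (m+3))⁻¹) := dT (m+2)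
      rw [d]
      exact (hC1_1 m).inv_right.mul_right ((hB3_1 m).mul_right (hB1_1 m).inv_right)

/-- The seed commutation `σ₂ τ₄ = τ₄ σ₂`. -/
lemma hB3_24 : Commute (S 2) (T 4) := by
  show S 2 * T 4 = T 4 * S 2
  have c14 : S 1 * T 4 = T 4 * S 1 := (hB3_1 1).eq
  have h12 : X 1 * T 4 = T 3 * X 1 := hr12.symm
  have h30 : T 3 * X 0 = X 0 * T 4 := hD1_0 1
  calc S 2 * T 4
      = (X 0)⁻¹ * (S 1 * (X 1 * (S 1 * T 4))) := by rw [eS2]; group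
    _ = (X 0)⁻¹ * (S 1 * (X 1 * (T 4 * S 1))) := by rw [c14]
    _ = (X 0)⁻¹ * (S 1 * (T 3 * (X 1 * S 1))) := by rw [R1 h12]
    _ = (X 0)⁻¹ * (T 3 * (S 1 * (X 1 * S 1))) := by rw [R1 hr17]
    _ = (X 0)⁻¹ * (T 3 * (X 0 * S 2)) := by rw [eX0S2]
    _ = (X 0)⁻¹ * (X 0 * (T 4 * S 2)) := by rw [R1 h30]
    _ = T 4 * S 2 := by group

lemma hB3_2 : ∀ m, Commute (S 2) (T (m+4))
  | 0 => hB3_24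
  | (m+1) => by
      have d : T (m+5) = (X (m+3))⁻¹ * (T (m+4) * (S (m+4))⁻¹) := dT (m+3)
      rw [d]
      exact (hC1_2 m).inv_right.mul_right ((hB3_2 m).mul_right (hB1_2 m).inv_right)

lemma hB3 : ∀ i j, 1 ≤ i → i + 2 ≤ j → Commute (S i) (T j)
  | 0, _, h0, _ => absurd h0 (by omega)
  | 1, j, _, hj => by
      obtain ⟨m, rfl⟩ : ∃ m, j = m+3 := ⟨j-3, by omega⟩
      exact hB3_1 m
  | 2, j, _, hj => by
      obtain ⟨m, rfl⟩ : ∃ m, j = m+4 := ⟨j-4, by omega⟩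
      exact hB3_2 m
  | (i+3), j, _, hj => by
      obtain ⟨p, rfl⟩ : ∃ p, j = p+5 := ⟨j-5, by omega⟩
      have prev : S (i+2) * T (p+4) = T (p+4) * S (i+2) :=
        (hB3 (i+2) (p+4) (by omega) (by omega)).eq
      have h2 := congrArg inn prev
      simp only [map_mul, shS2, shT4] at h2
      exact h2

end HVL
namespace HVL

/-- Candidate images of the `BV` generators in `HV`. -/
def ggen : BVGen → HV
  | BVGen.x i => X i
  | BVGen.s i => S (i + 1)
  | BVGen.t i => T (i + 1)

/-- The induced map on the free group. -/
def L : FreeGroup BVGen →* HV := FreeGroup.lift ggen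

lemma LX (i : ℕ) : L (BVGen.X i) = X i := FreeGroup.lift_apply_of
lemma LS1 (m : ℕ) : L (BVGen.S (m+1)) = S (m+1) := FreeGroup.lift_apply_of
lemma LS2 (m : ℕ) : L (BVGen.S (m+2)) = S (m+2) := LS1 (m+1)
lemma LS3 (m : ℕ) : L (BVGen.S (m+3)) = S (m+3) := LS1 (m+2)
lemma LT1 (m : ℕ) : L (BVGen.T (m+1)) = T (m+1) := FreeGroup.lift_apply_of
lemma LT2 (m : ℕ) : L (BVGen.T (m+2)) = T (m+2) := LT1 (m+1)
lemma LT3 (m : ℕ) : L (BVGen.T (m+3)) = T (m+3) := LT1 (m+2)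

lemma psi_rels : ∀ r ∈ BVGen.bvRels, L r = 1 := by
  rintro r (⟨i, j, hij, rfl⟩ | ⟨i, j, hi, hj, rfl⟩ | ⟨i, hi, rfl⟩ | ⟨i, j, hi, hj, rfl⟩ |
    ⟨i, hi, rfl⟩ | ⟨i, j, hi, hj, rfl⟩ | ⟨i, hi, rfl⟩ | ⟨i, j, hj, rfl⟩ | ⟨i, rfl⟩ |
    ⟨i, j, hj, rfl⟩ | ⟨i, hi, rfl⟩ | ⟨i, hi, rfl⟩) <;>
    rw [grel, map_mul, map_inv, mul_inv_eq_one]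
  · -- (A)
    simp only [map_mul, LX]
    exact hA i j hij
  · -- (B1)
    obtain ⟨m, rfl⟩ : ∃ m, i = m+1 := ⟨i-1, by omega⟩
    obtain ⟨n, rfl⟩ : ∃ n, j = n+1 := ⟨j-1, by omega⟩
    simp only [map_mul, LS1]
    exact (hB1 (m+1) (n+1) (by omega) (by omega)).eq
  · -- (B2)
    obtain ⟨m, rfl⟩ : ∃ m, i = m+1 := ⟨i-1, by omega⟩
    simp only [map_mul, LS1, LS2]
    simpa [mul_assoc] using hB2 m
  · -- (B3)
    obtain ⟨m, rfl⟩ : ∃ m, i = m+1 := ⟨i-1, by omega⟩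
    obtain ⟨n, rfl⟩ : ∃ n, j = n+1 := ⟨j-1, by omega⟩
    simp only [map_mul, LS1, LT1]
    exact (hB3 (m+1) (n+1) (by omega) (by omega)).eq
  · -- (B4)
    obtain ⟨m, rfl⟩ : ∃ m, i = m+1 := ⟨i-1, by omega⟩
    simp only [map_mul, LS1, LT2]
    simpa [mul_assoc] using hB4 m
  · -- (C1)
    obtain ⟨m, rfl⟩ : ∃ m, i = m+1 := ⟨i-1, by omega⟩
    simp only [map_mul, LS1, LX]
    exact (hC1 (m+1) j (by omega) hj).eq
  · -- (C2)
    obtain ⟨m, rfl⟩ : ∃ m, i = m+1 := ⟨i-1, by omega⟩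
    simp only [map_mul, LS1, LS2, LX, Nat.add_sub_cancel]
    simpa [mul_assoc] using hC2 m
  · -- (C3)
    obtain ⟨m, rfl⟩ : ∃ m, i = m+2 := ⟨i-2, by omega⟩
    simp only [map_mul, LS2, LS3, LX]
    exact hC3 j (m+2) hj
  · -- (C4)
    simp only [map_mul, LS1, LS2, LX]
    simpa [mul_assoc] using hC4 i
  · -- (D1)
    obtain ⟨m, rfl⟩ : ∃ m, i = m+2 := ⟨i-2, by omega⟩
    simp only [map_mul, LT2, LT3, LX]
    exact hD1 j (m+2) hj
  · -- (D2)
    obtain ⟨m, rfl⟩ : ∃ m, i = m+1 := ⟨i-1, by omega⟩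
    simp only [map_mul, LT1, LT2, LS1, LX, Nat.add_sub_cancel]
    exact hD2 m
  · -- (D3)
    obtain ⟨m, rfl⟩ : ∃ m, i = m+1 := ⟨i-1, by omega⟩
    simp only [map_mul, LT1, LT2, LS1, LX, Nat.add_sub_cancel]
    simpa [mul_assoc] using hD3 m

/-- The homomorphism `GBV →* HV`. -/
def Psi0 : GBV →* HV := PresentedGroup.toGroup psi_rels

lemma Psi0_sg (m : ℕ) : Psi0 (GBV.sg (m+1)) = S (m+1) := PresentedGroup.toGroup.of _
lemma Psi0_tg (m : ℕ) : Psi0 (GBV.tg (m+1)) = T (m+1) := PresentedGroup.toGroup.of _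

lemma vRels_le_ker : vRelsCl ≤ Psi0.ker := by
  apply Subgroup.normalClosure_le_normal
  rintro g ⟨i, hi, (rfl | rfl)⟩ <;>
    obtain ⟨m, rfl⟩ : ∃ m, i = m+1 := ⟨i-1, by omega⟩
  · refine MonoidHom.mem_ker.mpr ?_
    rw [map_pow, Psi0_sg, pow_two]
    exact hsqS m
  · refine MonoidHom.mem_ker.mpr ?_
    rw [map_pow, Psi0_tg, pow_two]
    exact hsqT m

/-- The homomorphism `GV →* HV`. -/
def Psi : GV →* HV := QuotientGroup.lift vRelsCl Psi0 (fun g hg => vRels_le_ker hg)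

end HVL
section Assembly

open HVL GBV

lemma Phi_pm : ∀ w, Phi (HVL.pm w) = mkV (F w) := by
  have h : Phi.comp HVL.pm = mkV.comp F := by
    apply FreeGroup.ext_hom
    intro a
    cases a <;> rfl
  intro w
  exact congrFun (congrArg (fun f => f.toFun) h) w

lemma Psi0_of (b : BVGen) : Psi0 (PresentedGroup.of b) = ggen b :=
  PresentedGroup.toGroup.of _

lemma comp1 : Psi.comp Phi = MonoidHom.id HV := by
  apply PresentedGroup.ext
  intro a
  show Psi (Phi (PresentedGroup.of a)) = PresentedGroup.of a
  rw [show Phi (PresentedGroup.of a) = mkV (fgen a) from PresentedGroup.toGroup.of _,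
    show Psi (mkV (fgen a)) = Psi0 (fgen a) from QuotientGroup.lift_mk' _ _ _]
  cases a <;> exact Psi0_of _

lemma comp2 : Phi.comp Psi = MonoidHom.id GV := by
  apply QuotientGroup.monoidHom_ext
  apply PresentedGroup.ext
  intro b
  show Phi (Psi (mkV (PresentedGroup.of b))) = mkV (PresentedGroup.of b)
  have hps : Psi (mkV (PresentedGroup.of b)) = Psi0 (PresentedGroup.of b) :=
    QuotientGroup.lift_mk' _ _ _
  rw [hps, Psi0_of]
  cases b with
  | x i =>
      show Phi (HVL.pm (xH i)) = mkV (PresentedGroup.of (BVGen.x i))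
      rw [Phi_pm, F_xH i]
      rfl
  | s i =>
      show Phi (HVL.pm (sH (i+1))) = mkV (PresentedGroup.of (BVGen.s i))
      rw [Phi_pm, F_sH i]
      rfl
  | t i =>
      show Phi (HVL.pm (tH (i+1))) = mkV (PresentedGroup.of (BVGen.t i))
      rw [Phi_pm, F_tH i]
      rfl

/-- The isomorphism `HV ≃* GV`. -/
noncomputable def hvEquiv : HV ≃* GV := MonoidHom.toMulEquiv Phi Psi comp1 comp2

end Assembly

/-- There is a group isomorphism `H_V ≃ G_V` sending `x₀ ↦ x₀`, `x₁ ↦ x₁`,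
`σ₁ ↦ σ₁`, `τ₁ ↦ τ₁`; hence Thompson's group `V` admits a presentation with
4 generators and 20 relators. -/
theorem hv_iso_v :
    ∃ e : HV ≃* GV,
      e (PresentedGroup.of HGen.x0) = QuotientGroup.mk' vRelsCl (GBV.xg 0) ∧
      e (PresentedGroup.of HGen.x1) = QuotientGroup.mk' vRelsCl (GBV.xg 1) ∧
      e (PresentedGroup.of HGen.s1) = QuotientGroup.mk' vRelsCl (GBV.sg 1) ∧
      e (PresentedGroup.of HGen.t1) = QuotientGroup.mk' vRelsCl (GBV.tg 1) := by
  exact ⟨hvEquiv, GBV.Phi_x0, GBV.Phi_x1, GBV.Phi_s1, GBV.Phi_t1⟩
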